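/- Let $\Omega\subset\mathbb{R}^n$ be a bounded domain, $a\in (W^{1,\infty}(\Omega))^{n\times n}$ symmetric, $u_0\in W^{2,\infty}(\Omega)$, $d\in C^2(\overline\Omega)$ with $d>0$ on $\overline\Omega$, and $\varphi_0(x)=e^{\lambda d(x)}$ for fixed $\lambda>0$. Define the first-order operator $\mathcal{L}_0 g = \mathrm{div}(g\, a\nabla u_0) = a\nabla u_0\cdot\nabla g + \mathrm{div}(a\nabla u_0)\, g$. Assume there exists $\kappa_2>0$ with $|a\nabla u_0\cdot\nabla d|\ge\kappa_2$ a.e. in $\Omega$. Then there exist constants $C>0$ and $s_3>0$ such that $s^2\int_\Omega |g|^2 e^{2s\varphi_0}\,dx \le C\int_\Omega |\mathcal{L}_0 g|^2 e^{2s\varphi_0}\,dx$ for all $s\ge s_3$ and all $g\in H_0^1(\Omega)$. -/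

import Mathlib

open MeasureTheory Real

/-- The `i`-th partial derivative of `f` at `x`. -/
noncomputable def pd {n : ℕ} (f : EuclideanSpace ℝ (Fin n) → ℝ) (i : Fin n)
    (x : EuclideanSpace ℝ (Fin n)) : ℝ :=
  fderiv ℝ f x (EuclideanSpace.single i 1)

/-- The first-order transport operator `L₀ g = div(g a ∇u₀)`. -/
noncomputable def L0op {n : ℕ}
    (a : EuclideanSpace ℝ (Fin n) → Fin n → Fin n → ℝ)
    (u0 g : EuclideanSpace ℝ (Fin n) → ℝ) (x : EuclideanSpace ℝ (Fin n)) : ℝ :=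
  ∑ i, pd (fun y => g y * ∑ j, a y i j * pd u0 j y) i x


variable {n : ℕ}

lemma continuous_pd {h : EuclideanSpace ℝ (Fin n) → ℝ} (hh : ContDiff ℝ 1 h) (i : Fin n) :
    Continuous fun x => pd h i x :=
  (hh.continuous_fderiv one_ne_zero).clm_apply continuous_const

lemma contDiff_pd {h : EuclideanSpace ℝ (Fin n) → ℝ} (hh : ContDiff ℝ 2 h) (i : Fin n) :
    ContDiff ℝ 1 fun x => pd h i x :=
  (hh.fderiv_right (by norm_num)).clm_apply contDiff_const

lemma pd_mul {f h : EuclideanSpace ℝ (Fin n) → ℝ} {x : EuclideanSpace ℝ (Fin n)} (hf : DifferentiableAt ℝ f x)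
    (hh : DifferentiableAt ℝ h x) (i : Fin n) :
    pd (fun y => f y * h y) i x = pd f i x * h x + f x * pd h i x := by
  unfold pd; rw [fderiv_fun_mul hf hh]; simp; ring

lemma pd_exp_mul {f : EuclideanSpace ℝ (Fin n) → ℝ} (hf : Differentiable ℝ f) (c : ℝ) (i : Fin n) (x : EuclideanSpace ℝ (Fin n)) :
    pd (fun y => Real.exp (c * f y)) i x = c * Real.exp (c * f x) * pd f i x := by
  have h1 : HasFDerivAt (fun y => c * f y) (c • fderiv ℝ f x) x :=
    ((hf x).hasFDerivAt).const_mul c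
  have h2 := h1.exp
  unfold pd; rw [h2.fderiv]; simp; ring

/-- divergence of the field b -/
noncomputable def Dvf (b : Fin n → EuclideanSpace ℝ (Fin n) → ℝ)
    (x : EuclideanSpace ℝ (Fin n)) : ℝ := ∑ i, pd (b i) i x

/-- P = b · ∇φ -/
noncomputable def Pf (b : Fin n → EuclideanSpace ℝ (Fin n) → ℝ)
    (φ : EuclideanSpace ℝ (Fin n) → ℝ) (x : EuclideanSpace ℝ (Fin n)) : ℝ :=
  ∑ i, b i x * pd φ i x

/-- Q = div (P b) -/
noncomputable def Qf (b : Fin n → EuclideanSpace ℝ (Fin n) → ℝ)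
    (φ : EuclideanSpace ℝ (Fin n) → ℝ) (x : EuclideanSpace ℝ (Fin n)) : ℝ :=
  ∑ i, pd (fun y => Pf b φ y * b i y) i x

noncomputable def wf (φ : EuclideanSpace ℝ (Fin n) → ℝ) (s : ℝ)
    (g : EuclideanSpace ℝ (Fin n) → ℝ) (x : EuclideanSpace ℝ (Fin n)) : ℝ :=
  g x * Real.exp (s * φ x)

noncomputable def Wf (φ : EuclideanSpace ℝ (Fin n) → ℝ) (s : ℝ)
    (g : EuclideanSpace ℝ (Fin n) → ℝ) (x : EuclideanSpace ℝ (Fin n)) : ℝ :=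
  wf φ s g x * wf φ s g x

section lemmas
variable {b : Fin n → EuclideanSpace ℝ (Fin n) → ℝ} {φ g : EuclideanSpace ℝ (Fin n) → ℝ} {s : ℝ}

lemma contDiff_w (hφ : ContDiff ℝ 1 φ) (hg : ContDiff ℝ 1 g) :
    ContDiff ℝ 1 (wf φ s g) := hg.mul ((contDiff_const.mul hφ).exp)

lemma hcs_w (hgc : HasCompactSupport g) : HasCompactSupport (wf φ s g) :=
  hgc.mul_right

lemma contDiff_W (hφ : ContDiff ℝ 1 φ) (hg : ContDiff ℝ 1 g) :
    ContDiff ℝ 1 (Wf φ s g) := (contDiff_w hφ hg).mul (contDiff_w hφ hg)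

lemma hcs_W (hgc : HasCompactSupport g) : HasCompactSupport (Wf φ s g) :=
  (hcs_w hgc).mul_right

lemma contDiff_P (hb : ∀ i, ContDiff ℝ 1 (b i)) (hφ : ContDiff ℝ 2 φ) :
    ContDiff ℝ 1 (Pf b φ) :=
  ContDiff.sum fun i _ => (hb i).mul (contDiff_pd hφ i)

lemma continuous_Dv (hb : ∀ i, ContDiff ℝ 1 (b i)) : Continuous (Dvf b) :=
  continuous_finset_sum _ fun i _ => continuous_pd (hb i) i

lemma continuous_Q (hb : ∀ i, ContDiff ℝ 1 (b i)) (hφ : ContDiff ℝ 2 φ) :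
    Continuous (Qf b φ) :=
  continuous_finset_sum _ fun i _ =>
    continuous_pd ((contDiff_P hb hφ).mul (hb i)) i

lemma pd_w (hφ : ContDiff ℝ 1 φ) (hg : ContDiff ℝ 1 g) (i : Fin n) (x : EuclideanSpace ℝ (Fin n)) :
    pd (wf φ s g) i x = pd g i x * Real.exp (s * φ x)
      + g x * (s * Real.exp (s * φ x) * pd φ i x) := by
  have h := pd_mul (f := g) (h := fun y => Real.exp (s * φ y))
    ((hg.differentiable one_ne_zero) x)
    ((((contDiff_const.mul hφ).exp).differentiable one_ne_zero) x) i
  have h2 := pd_exp_mul (hφ.differentiable one_ne_zero) s i x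
  unfold wf
  rw [h, h2]

lemma pd_W (hφ : ContDiff ℝ 1 φ) (hg : ContDiff ℝ 1 g) (i : Fin n) (x : EuclideanSpace ℝ (Fin n)) :
    pd (Wf φ s g) i x = 2 * wf φ s g x * pd (wf φ s g) i x := by
  have h := pd_mul (f := wf φ s g) (h := wf φ s g)
    (((contDiff_w hφ hg).differentiable one_ne_zero) x)
    (((contDiff_w hφ hg).differentiable one_ne_zero) x) i
  unfold Wf
  rw [h]; ring

lemma L0_sum_eq (hb : ∀ i, ContDiff ℝ 1 (b i)) (hg : ContDiff ℝ 1 g) (x : EuclideanSpace ℝ (Fin n)) :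
    (∑ i, pd (fun y => g y * b i y) i x)
      = (∑ i, b i x * pd g i x) + Dvf b x * g x := by
  have h : ∀ i : Fin n, pd (fun y => g y * b i y) i x
      = pd g i x * b i x + g x * pd (b i) i x := fun i =>
    pd_mul ((hg.differentiable one_ne_zero) x) (((hb i).differentiable one_ne_zero) x) i
  simp only [h, Finset.sum_add_distrib, ← Finset.mul_sum]
  unfold Dvf
  congr 1
  · exact Finset.sum_congr rfl fun i _ => mul_comm _ _
  · exact mul_comm _ _

lemma Z_id (hb : ∀ i, ContDiff ℝ 1 (b i)) (hφ : ContDiff ℝ 1 φ)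
    (hg : ContDiff ℝ 1 g) (x : EuclideanSpace ℝ (Fin n)) :
    (∑ i, pd (fun y => g y * b i y) i x) * Real.exp (s * φ x)
      = ((∑ i, b i x * pd (wf φ s g) i x) + Dvf b x * wf φ s g x)
        - s * Pf b φ x * wf φ s g x := by
  have h1 : ∑ i, b i x * pd (wf φ s g) i x
      = (∑ i, b i x * pd g i x) * Real.exp (s * φ x)
        + s * Real.exp (s * φ x) * g x * Pf b φ x := by
    simp only [pd_w hφ hg, Pf, Finset.mul_sum, Finset.sum_mul]
    rw [← Finset.sum_add_distrib]
    exact Finset.sum_congr rfl fun i _ => by ring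
  rw [L0_sum_eq hb hg x, h1]
  unfold wf
  ring

end lemmas

section integral
variable {b : Fin n → EuclideanSpace ℝ (Fin n) → ℝ} {φ g : EuclideanSpace ℝ (Fin n) → ℝ} {s : ℝ}

lemma hcs_pd {h : EuclideanSpace ℝ (Fin n) → ℝ} (hc : HasCompactSupport h) (i : Fin n) :
    HasCompactSupport fun x => pd h i x :=
  (hc.fderiv (𝕜 := ℝ)).comp_left (g := fun L : EuclideanSpace ℝ (Fin n) →L[ℝ] ℝ =>
    L (EuclideanSpace.single i 1)) rfl

lemma ibp_pd {f W : EuclideanSpace ℝ (Fin n) → ℝ} (hf : ContDiff ℝ 1 f) (hW : ContDiff ℝ 1 W)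
    (hWc : HasCompactSupport W) (i : Fin n) :
    ∫ x, f x * pd W i x = - ∫ x, pd f i x * W x := by
  apply integral_mul_fderiv_eq_neg_fderiv_mul_of_integrable
  · exact (Continuous.mul (continuous_pd hf i) (hW.continuous)).integrable_of_hasCompactSupport
      (hWc.mul_left)
  · exact (Continuous.mul (hf.continuous) (continuous_pd hW i)).integrable_of_hasCompactSupport
      ((hcs_pd hWc i).mul_left)
  · exact (Continuous.mul hf.continuous hW.continuous).integrable_of_hasCompactSupport
      hWc.mul_left
  · exact fun x _ => hf.differentiable one_ne_zero x
  · exact fun x _ => hW.differentiable one_ne_zero x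

lemma pd_eq_zero_of_nmem {f : EuclideanSpace ℝ (Fin n) → ℝ} {x : EuclideanSpace ℝ (Fin n)}
    (hx : x ∉ tsupport f) (i : Fin n) : pd f i x = 0 := by
  have h : f =ᶠ[nhds x] 0 := notMem_tsupport_iff_eventuallyEq.mp hx
  unfold pd
  rw [h.fderiv_eq]
  have : fderiv ℝ (0 : EuclideanSpace ℝ (Fin n) → ℝ) x = 0 := by
    rw [show (0 : EuclideanSpace ℝ (Fin n) → ℝ) = fun _ => (0:ℝ) from rfl, fderiv_fun_const]
    rfl
  rw [this]
  rfl

lemma L0_vanish {x : EuclideanSpace ℝ (Fin n)} (hx : x ∉ tsupport g) :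
    ∑ i, pd (fun y => g y * b i y) i x = 0 :=
  Finset.sum_eq_zero fun i _ => pd_eq_zero_of_nmem
    (fun hmem => hx (tsupport_mul_subset_left hmem)) i

lemma ptwise (hb : ∀ i, ContDiff ℝ 1 (b i)) (hφ : ContDiff ℝ 1 φ)
    (hg : ContDiff ℝ 1 g) (x : EuclideanSpace ℝ (Fin n)) :
    s^2*(Pf b φ x^2*Wf φ s g x) - 2*s*(Pf b φ x*Dvf b x*Wf φ s g x)
      - s*(∑ i, Pf b φ x * b i x * pd (Wf φ s g) i x)
    ≤ (∑ i, pd (fun y => g y * b i y) i x)^2 * Real.exp (2*s*φ x) := by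
  have hz := Z_id (s := s) hb hφ hg x
  have hsum : ∑ i, Pf b φ x * b i x * pd (Wf φ s g) i x
      = 2 * Pf b φ x * wf φ s g x * (∑ i, b i x * pd (wf φ s g) i x) := by
    rw [Finset.mul_sum]
    exact Finset.sum_congr rfl fun i _ => by rw [pd_W hφ hg]; ring
  have hexp2 : Real.exp (2*s*φ x) = Real.exp (s*φ x) * Real.exp (s*φ x) := by
    rw [← Real.exp_add]; ring_nf
  have hkey : (∑ i, pd (fun y => g y * b i y) i x)^2 * Real.exp (2*s*φ x)
      = (((∑ i, b i x * pd (wf φ s g) i x) + Dvf b x * wf φ s g x)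
          - s * Pf b φ x * wf φ s g x)^2 := by
    rw [← hz, hexp2]; ring
  have hW : Wf φ s g x = wf φ s g x * wf φ s g x := rfl
  rw [hkey, hsum, hW]
  nlinarith [sq_nonneg ((∑ i, b i x * pd (wf φ s g) i x) + Dvf b x * wf φ s g x)]

end integral

theorem key (Ω : Set (EuclideanSpace ℝ (Fin n))) (hΩo : IsOpen Ω)
    (b : Fin n → EuclideanSpace ℝ (Fin n) → ℝ) (hb : ∀ i, ContDiff ℝ 1 (b i))
    (φ : EuclideanSpace ℝ (Fin n) → ℝ) (hφ : ContDiff ℝ 2 φ)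
    (K M s : ℝ) (hs : 0 < s)
    (hK : ∀ᵐ x ∂(volume.restrict Ω), K ≤ (Pf b φ x)^2)
    (hM : ∀ x ∈ Ω, 2*Pf b φ x*Dvf b x - Qf b φ x ≤ M)
    (g : EuclideanSpace ℝ (Fin n) → ℝ) (hg : ContDiff ℝ 1 g)
    (hgc : HasCompactSupport g) (hgs : tsupport g ⊆ Ω) :
    (s^2*K - s*M) * ∫ x, Wf φ s g x ≤
      ∫ x, (∑ i, pd (fun y => g y * b i y) i x)^2 * Real.exp (2*s*φ x) := by
  have hφ1 : ContDiff ℝ 1 φ := hφ.of_le one_le_two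
  have hWC : ContDiff ℝ 1 (Wf φ s g) := contDiff_W hφ1 hg
  have hWc : HasCompactSupport (Wf φ s g) := hcs_W hgc
  have hPC : ContDiff ℝ 1 (Pf b φ) := contDiff_P hb hφ
  have hDc : Continuous (Dvf b) := continuous_Dv hb
  have htW : tsupport (Wf φ s g) ⊆ Ω := fun x hx =>
    hgs (tsupport_mul_subset_left (tsupport_mul_subset_left hx))
  -- integrability
  have iW : Integrable (Wf φ s g) := hWC.continuous.integrable_of_hasCompactSupport hWc
  have i1 : Integrable (fun x => Pf b φ x^2 * Wf φ s g x) :=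
    ((hPC.continuous.pow 2).mul hWC.continuous).integrable_of_hasCompactSupport hWc.mul_left
  have i2 : Integrable (fun x => Pf b φ x * Dvf b x * Wf φ s g x) :=
    (((hPC.continuous.mul hDc)).mul hWC.continuous).integrable_of_hasCompactSupport hWc.mul_left
  have i3 : ∀ i : Fin n, Integrable (fun x => Pf b φ x * b i x * pd (Wf φ s g) i x) := fun i =>
    ((hPC.continuous.mul (hb i).continuous).mul
      (continuous_pd hWC i)).integrable_of_hasCompactSupport (hcs_pd hWc i).mul_left
  have i4 : ∀ i : Fin n, Integrable
      (fun x => pd (fun y => Pf b φ y * b i y) i x * Wf φ s g x) := fun i =>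
    ((continuous_pd (hPC.mul (hb i)) i).mul
      hWC.continuous).integrable_of_hasCompactSupport hWc.mul_left
  have iL : Integrable (fun x =>
      (∑ i, pd (fun y => g y * b i y) i x)^2 * Real.exp (2*s*φ x)) := by
    apply Continuous.integrable_of_hasCompactSupport
    · exact ((continuous_finset_sum _ fun i _ => continuous_pd (hg.mul (hb i)) i).pow 2).mul
        (Real.continuous_exp.comp ((continuous_const.mul hφ1.continuous)))
    · exact HasCompactSupport.intro hgc fun x hx => by rw [L0_vanish hx]; simp
  have iA : Integrable (fun x => s^2*(Pf b φ x^2*Wf φ s g x)) volume := i1.const_mul _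
  have iB : Integrable (fun x => 2*s*(Pf b φ x*Dvf b x*Wf φ s g x)) volume := i2.const_mul _
  have iC : Integrable
      (fun x => s*(∑ i, Pf b φ x * b i x * pd (Wf φ s g) i x)) volume :=
    (integrable_finset_sum _ fun i _ => i3 i).const_mul _
  have iD : Integrable
      (fun x => s*(∑ i, pd (fun y => Pf b φ y * b i y) i x * Wf φ s g x)) volume :=
    (integrable_finset_sum _ fun i _ => i4 i).const_mul _
  have iAB : Integrable (fun x => s^2*(Pf b φ x^2*Wf φ s g x)
      - 2*s*(Pf b φ x*Dvf b x*Wf φ s g x)) volume := iA.sub iB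
  -- step 1 : pointwise inequality integrated
  have hmono1 : ∫ x, (s^2*(Pf b φ x^2*Wf φ s g x) - 2*s*(Pf b φ x*Dvf b x*Wf φ s g x)
        - s*(∑ i, Pf b φ x * b i x * pd (Wf φ s g) i x))
      ≤ ∫ x, (∑ i, pd (fun y => g y * b i y) i x)^2 * Real.exp (2*s*φ x) := by
    exact integral_mono (iAB.sub iC) iL (fun x => ptwise hb hφ1 hg x)
  have e1 : ∫ x, (s^2*(Pf b φ x^2*Wf φ s g x) - 2*s*(Pf b φ x*Dvf b x*Wf φ s g x)
        - s*(∑ i, Pf b φ x * b i x * pd (Wf φ s g) i x))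
      = s^2 * (∫ x, Pf b φ x^2 * Wf φ s g x)
        - 2*s*(∫ x, Pf b φ x * Dvf b x * Wf φ s g x)
        - s * ∑ i, ∫ x, Pf b φ x * b i x * pd (Wf φ s g) i x := by
    rw [integral_sub iAB iC, integral_sub iA iB, integral_const_mul, integral_const_mul,
      integral_const_mul, integral_finset_sum _ (fun i _ => i3 i)]
  -- integration by parts
  have hibp : ∀ i : Fin n, ∫ x, Pf b φ x * b i x * pd (Wf φ s g) i x
      = - ∫ x, pd (fun y => Pf b φ y * b i y) i x * Wf φ s g x := fun i =>
    ibp_pd (hPC.mul (hb i)) hWC hWc i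
  -- step 4 : lower bound
  have e2 : ∫ x, (s^2*(Pf b φ x^2*Wf φ s g x) - 2*s*(Pf b φ x*Dvf b x*Wf φ s g x)
        + s*(∑ i, pd (fun y => Pf b φ y * b i y) i x * Wf φ s g x))
      = s^2 * (∫ x, Pf b φ x^2 * Wf φ s g x)
        - 2*s*(∫ x, Pf b φ x * Dvf b x * Wf φ s g x)
        + s * ∑ i, ∫ x, pd (fun y => Pf b φ y * b i y) i x * Wf φ s g x := by
    rw [integral_add iAB iD, integral_sub iA iB, integral_const_mul, integral_const_mul,
      integral_const_mul, integral_finset_sum _ (fun i _ => i4 i)]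
  have hmono2 : (s^2*K - s*M) * ∫ x, Wf φ s g x
      ≤ ∫ x, (s^2*(Pf b φ x^2*Wf φ s g x) - 2*s*(Pf b φ x*Dvf b x*Wf φ s g x)
        + s*(∑ i, pd (fun y => Pf b φ y * b i y) i x * Wf φ s g x)) := by
    rw [← integral_const_mul]
    refine integral_mono_ae (iW.const_mul _) (iAB.add iD) ?_
    have hKae : ∀ᵐ x, x ∈ Ω → K ≤ Pf b φ x^2 :=
      (ae_restrict_iff' hΩo.measurableSet).mp hK
    filter_upwards [hKae] with x hKx
    by_cases hxs : x ∈ tsupport (Wf φ s g)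
    · have hxΩ := htW hxs
      have h1 := hKx hxΩ
      have h2 := hM x hxΩ
      have hW0 : 0 ≤ Wf φ s g x := mul_self_nonneg _
      have hQ : ∑ i, pd (fun y => Pf b φ y * b i y) i x * Wf φ s g x
          = Qf b φ x * Wf φ s g x := by
        unfold Qf
        rw [Finset.sum_mul]
      rw [hQ]
      nlinarith [mul_nonneg (mul_nonneg (sq_nonneg s) (sub_nonneg.mpr h1)) hW0,
        mul_nonneg (mul_nonneg hs.le (sub_nonneg.mpr h2)) hW0]
    · have hW0 : Wf φ s g x = 0 := image_eq_zero_of_notMem_tsupport hxs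
      simp [hW0]
  -- combine
  have hsum2 : s * ∑ i, ∫ x, pd (fun y => Pf b φ y * b i y) i x * Wf φ s g x
      = - (s * ∑ i, ∫ x, Pf b φ x * b i x * pd (Wf φ s g) i x) := by
    have : ∑ i : Fin n, ∫ x, Pf b φ x * b i x * pd (Wf φ s g) i x
        = - ∑ i : Fin n, ∫ x, pd (fun y => Pf b φ y * b i y) i x * Wf φ s g x := by
      simp only [hibp, Finset.sum_neg_distrib]
    rw [this]; ring
  linarith [hmono1, hmono2, e1, e2, hsum2]


/-- The transport vector field `b = a ∇u₀`. -/
noncomputable def bfield {n : ℕ} (a : EuclideanSpace ℝ (Fin n) → Fin n → Fin n → ℝ)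
    (u0 : EuclideanSpace ℝ (Fin n) → ℝ) (i : Fin n) (x : EuclideanSpace ℝ (Fin n)) : ℝ :=
  ∑ j, a x i j * pd u0 j x

/-- The weight `φ₀ = e^{λ d}`. -/
noncomputable def phid {n : ℕ} (d : EuclideanSpace ℝ (Fin n) → ℝ) (lam : ℝ)
    (x : EuclideanSpace ℝ (Fin n)) : ℝ := Real.exp (lam * d x)

/-- Zeroth-order Carleman estimate for `L₀ g = div(g a ∇u₀)` with weight
`φ₀ = e^{λ d}`, under the non-degeneracy `|a ∇u₀ · ∇d| ≥ κ₂` a.e. in `Ω`: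
there are `C > 0`, `s₃ > 0` with
`s² ∫_Ω g² e^{2sφ₀} ≤ C ∫_Ω |L₀ g|² e^{2sφ₀}` for all `s ≥ s₃`, `g ∈ H₀¹(Ω)`. -/
theorem carleman_L0_zeroth_order {n : ℕ}
    (Ω : Set (EuclideanSpace ℝ (Fin n))) (hΩo : IsOpen Ω)
    (hΩb : Bornology.IsBounded Ω)
    (a : EuclideanSpace ℝ (Fin n) → Fin n → Fin n → ℝ)
    (ha : ∀ i j, ContDiff ℝ 1 (fun x => a x i j))
    (hasymm : ∀ x i j, a x i j = a x j i)
    (u0 : EuclideanSpace ℝ (Fin n) → ℝ) (hu0 : ContDiff ℝ 2 u0)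
    (d : EuclideanSpace ℝ (Fin n) → ℝ) (hd : ContDiff ℝ 2 d)
    (hdpos : ∀ x ∈ closure Ω, 0 < d x)
    (lam : ℝ) (hlam : 0 < lam) (κ2 : ℝ) (hκ2 : 0 < κ2)
    (hnondeg : ∀ᵐ x ∂(volume.restrict Ω),
      κ2 ≤ |∑ i, (∑ j, a x i j * pd u0 j x) * pd d i x|) :
    ∃ C > (0 : ℝ), ∃ s3 > (0 : ℝ), ∀ s ≥ s3,
      ∀ g : EuclideanSpace ℝ (Fin n) → ℝ,
        ContDiff ℝ 1 g → HasCompactSupport g → tsupport g ⊆ Ω →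
        s ^ 2 * ∫ x in Ω, g x ^ 2 * Real.exp (2 * s * Real.exp (lam * d x)) ≤
          C * ∫ x in Ω, (L0op a u0 g x) ^ 2
              * Real.exp (2 * s * Real.exp (lam * d x)) := by
  have hb : ∀ i, ContDiff ℝ 1 (bfield a u0 i) := fun i =>
    ContDiff.sum fun j _ => (ha i j).mul (contDiff_pd hu0 j)
  have hφ : ContDiff ℝ 2 (phid d lam) := (contDiff_const.mul hd).exp
  have hpdφ : ∀ (i : Fin n) x, pd (phid d lam) i x
      = lam * Real.exp (lam * d x) * pd d i x := fun i x =>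
    pd_exp_mul (hd.differentiable two_ne_zero) lam i x
  -- the a.e. lower bound for P²
  have hKae : ∀ᵐ x ∂(volume.restrict Ω),
      lam^2*κ2^2 ≤ (Pf (bfield a u0) (phid d lam) x)^2 := by
    filter_upwards [hnondeg, ae_restrict_mem hΩo.measurableSet] with x h1 h2
    have hd0 : 0 < d x := hdpos x (subset_closure h2)
    have hP : Pf (bfield a u0) (phid d lam) x
        = lam * Real.exp (lam * d x) * (∑ i, bfield a u0 i x * pd d i x) := by
      unfold Pf
      rw [Finset.mul_sum]
      exact Finset.sum_congr rfl fun i _ => by rw [hpdφ i x]; ring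
    rw [hP]
    have habs : κ2 ≤ |∑ i, bfield a u0 i x * pd d i x| := h1
    have hS2 : κ2^2 ≤ (∑ i, bfield a u0 i x * pd d i x)^2 := by
      have h := sq_abs (∑ i, bfield a u0 i x * pd d i x)
      nlinarith [abs_nonneg (∑ i, bfield a u0 i x * pd d i x)]
    have he : (1:ℝ) ≤ Real.exp (lam * d x) := by
      rw [Real.one_le_exp_iff]
      positivity
    calc lam^2*κ2^2 ≤ lam^2*(∑ i, bfield a u0 i x * pd d i x)^2 := by
          nlinarith [sq_nonneg lam]
      _ ≤ lam^2*(∑ i, bfield a u0 i x * pd d i x)^2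
            * (Real.exp (lam * d x))^2 := by
          have he2 : (1:ℝ) ≤ (Real.exp (lam * d x))^2 := by nlinarith
          exact le_mul_of_one_le_right (by positivity) he2
      _ = (lam * Real.exp (lam * d x) * (∑ i, bfield a u0 i x * pd d i x))^2 := by
          ring
  -- uniform bound M on the compact closure
  have hcl : IsCompact (closure Ω) := hΩb.isCompact_closure
  have hRcont : Continuous (fun x => 2*Pf (bfield a u0) (phid d lam) x * Dvf (bfield a u0) x
      - Qf (bfield a u0) (phid d lam) x) :=
    ((continuous_const.mul (contDiff_P hb hφ).continuous).mul (continuous_Dv hb)).sub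
      (continuous_Q hb hφ)
  obtain ⟨M0, hM0⟩ := hcl.exists_bound_of_continuousOn hRcont.continuousOn
  have hM : ∀ x ∈ Ω, 2*Pf (bfield a u0) (phid d lam) x * Dvf (bfield a u0) x
      - Qf (bfield a u0) (phid d lam) x ≤ max M0 0 := fun x hx =>
    le_trans (le_trans (le_abs_self _)
      (by simpa [Real.norm_eq_abs] using hM0 x (subset_closure hx))) (le_max_left _ _)
  have hKpos : (0:ℝ) < lam^2*κ2^2 := by positivity
  refine ⟨2/(lam^2*κ2^2), by positivity,
    max 1 (2*(max M0 0)/(lam^2*κ2^2)), lt_of_lt_of_le one_pos (le_max_left _ _), ?_⟩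
  intro s hs g hgC hgc hgs
  have hs1 : (1:ℝ) ≤ s := le_trans (le_max_left _ _) hs
  have hs0 : (0:ℝ) < s := lt_of_lt_of_le one_pos hs1
  have hsM : 2*(max M0 0)/(lam^2*κ2^2) ≤ s := le_trans (le_max_right _ _) hs
  have hM2 : 2*(max M0 0) ≤ s*(lam^2*κ2^2) := by
    rw [div_le_iff₀ hKpos] at hsM; linarith
  have hkey := key Ω hΩo (bfield a u0) hb (phid d lam) hφ (lam^2*κ2^2) (max M0 0) s hs0
    hKae hM g hgC hgc hgs
  have htW : tsupport (Wf (phid d lam) s g) ⊆ Ω := fun x hx =>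
    hgs (tsupport_mul_subset_left (tsupport_mul_subset_left hx))
  have hconv1 : ∫ x in Ω, g x ^ 2 * Real.exp (2 * s * Real.exp (lam * d x))
      = ∫ x, Wf (phid d lam) s g x := by
    have hfun : (fun x => g x ^ 2 * Real.exp (2 * s * Real.exp (lam * d x)))
        = Wf (phid d lam) s g := by
      funext x
      unfold Wf wf phid
      rw [show (2 * s * Real.exp (lam * d x))
          = s * Real.exp (lam * d x) + s * Real.exp (lam * d x) from by ring,
        Real.exp_add]
      ring
    rw [hfun]
    exact setIntegral_eq_integral_of_forall_compl_eq_zero fun x hx =>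
      image_eq_zero_of_notMem_tsupport fun hmem => hx (htW hmem)
  have hconv2 : ∫ x in Ω, (L0op a u0 g x)^2 * Real.exp (2 * s * Real.exp (lam * d x))
      = ∫ x, (∑ i, pd (fun y => g y * bfield a u0 i y) i x)^2
          * Real.exp (2*s*phid d lam x) := by
    have hfun : (fun x => (L0op a u0 g x)^2 * Real.exp (2 * s * Real.exp (lam * d x)))
        = fun x => (∑ i, pd (fun y => g y * bfield a u0 i y) i x)^2
            * Real.exp (2*s*phid d lam x) := rfl
    rw [hfun]
    exact setIntegral_eq_integral_of_forall_compl_eq_zero fun x hx => by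
      rw [L0_vanish (fun hmem => hx (hgs hmem))]; simp
  have hJ : 0 ≤ ∫ x, Wf (phid d lam) s g x :=
    integral_nonneg fun x => mul_self_nonneg _
  rw [hconv1, hconv2]
  have h6 : s*(max M0 0) ≤ s^2*(lam^2*κ2^2)/2 := by
    nlinarith [mul_le_mul_of_nonneg_left hM2 hs0.le]
  have h7 : (s^2*(lam^2*κ2^2)/2) * (∫ x, Wf (phid d lam) s g x)
      ≤ (s^2*(lam^2*κ2^2) - s*(max M0 0)) * (∫ x, Wf (phid d lam) s g x) :=
    mul_le_mul_of_nonneg_right (by linarith) hJ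
  have h8 := le_trans h7 hkey
  rw [div_mul_eq_mul_div, le_div_iff₀ hKpos]
  nlinarith [h8]
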